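/- Let $f$ be a probability density on $\mathbb{R}$ that is symmetric ($f(-x) = f(x)$) and unimodal (non-increasing on $[0,\infty)$). Then for any $L > 0$, $\sum_{\ell \in \mathbb{Z},\, \ell \ne 0} f(\ell L) \le \frac{4}{L} \int_{L/2}^\infty f(x)\, dx$. -/

import Mathlib

open MeasureTheory

/-- For a symmetric unimodal probability density `f` on `ℝ` and any `L > 0`,
`∑_{ℓ ∈ ℤ, ℓ ≠ 0} f(ℓL) ≤ (4/L) ∫_{L/2}^∞ f(x) dx`. -/
theorem sum_le_tail_integral (f : ℝ → ℝ) (hint : Integrable f)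
    (hnonneg : ∀ x, 0 ≤ f x) (hprob : ∫ x, f x = 1)
    (hsymm : ∀ x, f (-x) = f x) (hmono : AntitoneOn f (Set.Ici 0))
    (L : ℝ) (hL : 0 < L) :
    Summable (fun ℓ : ℤ => if ℓ = 0 then 0 else f ((ℓ : ℝ) * L)) ∧
    (∑' ℓ : ℤ, if ℓ = 0 then 0 else f ((ℓ : ℝ) * L))
      ≤ 4 / L * ∫ x in Set.Ici (L / 2), f x := by
  have hL2 : 0 < L / 2 := by linarith
  set F : ℤ → ℝ := fun ℓ => if ℓ = 0 then 0 else f ((ℓ : ℝ) * L) with hF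
  set g : ℕ → ℝ := fun n => f (((n : ℝ) + 1) * L) with hgdef
  set s : ℕ → Set ℝ := fun n =>
    Set.Ioc (((n : ℝ) + 1) * L - L / 2) (((n : ℝ) + 1) * L) with hsdef
  have hsub : ∀ n, s n ⊆ Set.Ici (L / 2) := by
    intro n x hx
    have hn : (0 : ℝ) ≤ (n : ℝ) := Nat.cast_nonneg n
    have h1 := hx.1
    simp only [Set.mem_Ici]
    nlinarith
  have hmeas : ∀ n, MeasurableSet (s n) := fun n => measurableSet_Ioc
  have hdisj : Pairwise (Function.onFun Disjoint s) := by
    have key : ∀ m n : ℕ, m < n → Disjoint (s m) (s n) := by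
      intro m n hmn
      have hmn' : (m : ℝ) + 1 ≤ (n : ℝ) := by exact_mod_cast hmn
      refine Set.disjoint_of_subset Set.Ioc_subset_Iic_self ?_
        (Set.Iic_disjoint_Ioi le_rfl)
      refine (Set.Ioc_subset_Ioi_self).trans (Set.Ioi_subset_Ioi ?_)
      nlinarith
    intro m n hmn
    rcases hmn.lt_or_gt with h | h
    · exact key m n h
    · exact (key n m h).symm
  have hInt : ∀ n : ℕ, g n ≤ 2 / L * ∫ x in s n, f x := by
    intro n
    set a : ℝ := ((n : ℝ) + 1) * L - L / 2 with ha
    set b : ℝ := ((n : ℝ) + 1) * L with hb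
    have hab : a ≤ b := by simp only [ha, hb]; linarith
    have h1 : ∫ x in s n, f x = ∫ x in a..b, f x :=
      (intervalIntegral.integral_of_le hab).symm
    have h2 : ∫ x in a..b, f b ≤ ∫ x in a..b, f x := by
      apply intervalIntegral.integral_mono_on hab
        intervalIntegrable_const hint.intervalIntegrable
      intro x hx
      have ha0 : (0 : ℝ) ≤ a := by
        rw [ha, hb]; nlinarith [Nat.cast_nonneg (α := ℝ) n]
      have hx0 : (0 : ℝ) ≤ x := le_trans ha0 hx.1
      have hb0 : (0 : ℝ) ≤ b := le_trans hx0 hx.2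
      exact hmono hx0 hb0 hx.2
    rw [intervalIntegral.integral_const, smul_eq_mul] at h2
    have hba : b - a = L / 2 := by simp only [ha, hb]; ring
    rw [hba] at h2
    have hgb : g n = f b := rfl
    rw [h1, hgb]
    have h3 : 2 / L * (L / 2 * f b) ≤ 2 / L * ∫ x in a..b, f x :=
      mul_le_mul_of_nonneg_left h2 (by positivity)
    calc f b = 2 / L * (L / 2 * f b) := by field_simp
      _ ≤ 2 / L * ∫ x in a..b, f x := h3
  have hHS : HasSum (fun n => ∫ x in s n, f x) (∫ x in ⋃ n, s n, f x) :=
    hasSum_integral_iUnion hmeas hdisj hint.integrableOn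
  have hUnionInt : ∫ x in ⋃ n, s n, f x ≤ ∫ x in Set.Ici (L / 2), f x := by
    apply setIntegral_mono_set hint.integrableOn
      (Filter.Eventually.of_forall hnonneg)
    exact Filter.Eventually.of_forall (Set.iUnion_subset hsub)
  have hsum_bound : Summable (fun n => 2 / L * ∫ x in s n, f x) :=
    hHS.summable.mul_left _
  have hgsum : Summable g :=
    Summable.of_nonneg_of_le (fun n => hnonneg _) hInt hsum_bound
  set S : ℝ := ∑' n, g n with hS
  have hSle : S ≤ 2 / L * ∫ x in Set.Ici (L / 2), f x := by
    have h1 : S ≤ ∑' n, 2 / L * ∫ x in s n, f x :=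
      Summable.tsum_le_tsum hInt hgsum hsum_bound
    have h2 : ∑' n, 2 / L * ∫ x in s n, f x
        = 2 / L * ∫ x in ⋃ n, s n, f x := by
      rw [tsum_mul_left, hHS.tsum_eq]
    rw [h2] at h1
    exact h1.trans (mul_le_mul_of_nonneg_left hUnionInt (by positivity))
  -- positive part
  have hpos : HasSum (fun n : ℕ => F n) S := by
    have h1 : HasSum (fun n : ℕ => F ((n : ℤ) + 1)) S := by
      have : (fun n : ℕ => F ((n : ℤ) + 1)) = g := by
        funext n
        simp only [hF, hgdef]
        rw [if_neg (by positivity)]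
        push_cast
        ring_nf
      rw [this]
      exact hgsum.hasSum
    have h2 : HasSum (fun n : ℕ => F ((n + 1 : ℕ) : ℤ)) S := by
      convert h1 using 2
      rw [Nat.cast_add, Nat.cast_one]
    have := (hasSum_nat_add_iff (f := fun n : ℕ => F n) 1).mp h2
    simpa [hF] using this
  have hneg : HasSum (fun n : ℕ => F (-(n + 1 : ℕ))) S := by
    have : (fun n : ℕ => F (-(n + 1 : ℕ))) = g := by
      funext n
      simp only [hF, hgdef]
      rw [if_neg (by omega)]
      push_cast
      rw [← hsymm (((n : ℝ) + 1) * L)]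
      ring_nf
    rw [this]
    exact hgsum.hasSum
  have hFull : HasSum F (S + S) := hpos.of_nat_of_neg_add_one hneg
  refine ⟨hFull.summable, ?_⟩
  rw [hFull.tsum_eq]
  have : (4 : ℝ) / L * ∫ x in Set.Ici (L / 2), f x
      = 2 / L * (∫ x in Set.Ici (L / 2), f x)
        + 2 / L * ∫ x in Set.Ici (L / 2), f x := by ring
  rw [this]
  exact add_le_add hSle hSle
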